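/- Let Σ be a set of strings in general position whose union is disconnected. Then one can add a simple string contained in a single face of G(Σ), joining points of two distinct connected components, such that the resulting set of strings is in general position, has fewer connected components, and has no obstruction if Σ has none. -/

import Mathlib

open Set Topology

/-- Points of the plane. -/
abbrev Pt : Type := ℝ × ℝ

/-- A string: image of `[0,1]` under a map continuous on `[0,1]` and injective on `(0,1)`. -/
structure PString where
  f : ℝ → Pt
  cont : ContinuousOn f (Set.Icc 0 1)
  inj : Set.InjOn f (Set.Ioo 0 1)

namespace PString

def carrier (s : PString) : Set Pt := s.f '' Set.Icc 0 1

def ends (s : PString) : Set Pt := {s.f 0, s.f 1}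

def Simple (s : PString) : Prop := Set.InjOn s.f (Set.Icc 0 1)

end PString

/-- `A` crosses `B` transversally at `p`: near `p` the set `A` has points on both
sides of `B` (they cannot be joined inside `U` without meeting `B`). -/
def CrossesAt (A B : Set Pt) (p : Pt) : Prop :=
  p ∈ A ∩ B ∧ ∀ U ∈ nhds p, ∃ x ∈ (A ∩ U) \ B, ∃ y ∈ (A ∩ U) \ B,
    ∀ K : Set Pt, K ⊆ U \ B → IsPreconnected K → x ∈ K → y ∉ K

/-- A set of strings is in general position. -/
def GenPos (S : Set PString) : Prop :=
  ∀ σ ∈ S, ∀ τ ∈ S, σ ≠ τ →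
    (σ.carrier ∩ τ.carrier).Finite ∧
    ∀ p ∈ σ.carrier ∩ τ.carrier,
      CrossesAt σ.carrier τ.carrier p ∨ p ∈ σ.ends ∨ p ∈ τ.ends

def StringUnion (S : Set PString) : Set Pt := ⋃ σ ∈ S, σ.carrier

/-- Vertices of the underlying plane graph `G(Σ)`: ends of strings and crossings. -/
def Vset (S : Set PString) : Set Pt :=
  (⋃ σ ∈ S, σ.ends) ∪
    {p | ∃ σ ∈ S, ∃ τ ∈ S, σ ≠ τ ∧ CrossesAt σ.carrier τ.carrier p}

/-- A simple closed (Jordan) curve. -/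
def IsJordanCurve (C : Set Pt) : Prop :=
  Nonempty (↥(Metric.sphere (0 : Pt) 1) ≃ₜ ↥C)

/-- A cycle of the underlying plane graph `G(Σ)`, viewed as a simple closed curve
contained in the union of the strings. -/
def IsCycleOf (S : Set PString) (C : Set Pt) : Prop :=
  IsJordanCurve C ∧ C ⊆ StringUnion S

/-- The closed disk bounded by a simple closed curve: the curve together with all
bounded complementary components. -/
def EnclosedDisk (C : Set Pt) : Set Pt :=
  C ∪ {p | p ∉ C ∧ Bornology.IsBounded (connectedComponentIn Cᶜ p)}

/-- The set `σ` has (at least) two local branches at `v` inside the closed disk bounded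
by `C`: arbitrarily close to `v` there are two points of `σ` inside the disk which cannot
be joined within `σ` inside the disk avoiding `v`. -/
def TwoBranchesInside (σ : Set Pt) (C : Set Pt) (v : Pt) : Prop :=
  v ∈ σ ∧ ∀ U ∈ nhds v,
    ∃ x ∈ (σ ∩ U ∩ EnclosedDisk C) \ {v}, ∃ y ∈ (σ ∩ U ∩ EnclosedDisk C) \ {v},
      ∀ K : Set Pt, K ⊆ (σ ∩ EnclosedDisk C) \ {v} → IsPreconnected K → x ∈ K → y ∉ K

/-- A vertex `v` of a cycle `C` is a rainbow: all edges at `v` inside the closed disk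
bounded by `C` belong to pairwise distinct strings, i.e. no single string has two
branches at `v` inside the disk. -/
def RainbowV (S : Set PString) (C : Set Pt) (v : Pt) : Prop :=
  v ∈ C ∧ v ∈ Vset S ∧ ¬ ∃ σ ∈ S, TwoBranchesInside σ.carrier C v

/-- An obstruction: a cycle of `G(Σ)` with at most two rainbow vertices. -/
def ObstructionS (S : Set PString) (C : Set Pt) : Prop :=
  IsCycleOf S C ∧ {v | RainbowV S C v}.ncard ≤ 2

/-- The two edges of `C` at `v` both lie in the string `σ`: locally around `v`, the
curve `C` is contained in `σ`. -/
def CycLocallyIn (C : Set Pt) (σ : PString) (v : Pt) : Prop :=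
  ∃ U ∈ nhds v, (C ∩ U) \ {v} ⊆ σ.carrier

/-- `δ(C)`: the vertices of `C` whose two incident edges on `C` belong to distinct
strings of `Σ`. -/
def deltaSet (S : Set PString) (C : Set Pt) : Set Pt :=
  {v | v ∈ C ∧ v ∈ Vset S ∧ ¬ ∃ σ ∈ S, CycLocallyIn C σ v}

/-- A pseudoline: image of an injective continuous proper map `ℝ → ℝ²` whose
complement is disconnected. -/
def IsPseudoline (L : Set Pt) : Prop :=
  (∃ f : ℝ → Pt, Continuous f ∧ Function.Injective f ∧ IsProperMap f ∧
    Set.range f = L) ∧ ¬ IsPreconnected Lᶜ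

/-- An arrangement of pseudolines: every two meet in exactly one point, a
transversal crossing. -/
def IsArrangement (A : Set (Set Pt)) : Prop :=
  (∀ L ∈ A, IsPseudoline L) ∧
  ∀ L ∈ A, ∀ M ∈ A, L ≠ M →
    (∃! p, p ∈ L ∩ M) ∧ ∀ p ∈ L ∩ M, CrossesAt L M p

/-- `Σ` extends to an arrangement of pseudolines: a different pseudoline for each
string, each string contained in its pseudoline. -/
def ExtendsToArrangement (S : Set PString) : Prop :=
  ∃ A : Set (Set Pt), IsArrangement A ∧ ∃ ℓ : PString → Set Pt,
    Set.InjOn ℓ S ∧ ∀ σ ∈ S, ℓ σ ∈ A ∧ σ.carrier ⊆ ℓ σ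

/-- A (closed) simple arc from `a` to `b`. -/
def IsArc (e : Set Pt) (a b : Pt) : Prop :=
  ∃ g : ℝ → Pt, ContinuousOn g (Set.Icc 0 1) ∧ Set.InjOn g (Set.Icc 0 1) ∧
    g '' Set.Icc 0 1 = e ∧ g 0 = a ∧ g 1 = b

/-- `p` is incident with the outer (unbounded) face of `G(Σ)`. -/
def InOuterFace (S : Set PString) (p : Pt) : Prop :=
  p ∈ closure {q | q ∉ StringUnion S ∧
    ¬ Bornology.IsBounded (connectedComponentIn (StringUnion S)ᶜ q)}

/-- The set of connected components of a subset of the plane. -/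
def Comps (X : Set Pt) : Set (Set Pt) :=
  {K | ∃ p ∈ X, K = connectedComponentIn X p}

section Helpers

open Real
noncomputable def sqParam (θ : ℝ) : ℝ × ℝ :=
  (max |Real.cos θ| |Real.sin θ|)⁻¹ • (Real.cos θ, Real.sin θ)

lemma sqm_pos (θ : ℝ) : 0 < max |Real.cos θ| |Real.sin θ| := by
  rcases lt_or_ge 0 (max |Real.cos θ| |Real.sin θ|) with h | h
  · exact h
  · exfalso
    have hc : |Real.cos θ| ≤ 0 := le_trans (le_max_left _ _) h
    have hs : |Real.sin θ| ≤ 0 := le_trans (le_max_right _ _) h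
    have hc0 : Real.cos θ = 0 := abs_eq_zero.mp (le_antisymm hc (abs_nonneg _))
    have hs0 : Real.sin θ = 0 := abs_eq_zero.mp (le_antisymm hs (abs_nonneg _))
    have := Real.sin_sq_add_cos_sq θ
    rw [hc0, hs0] at this; norm_num at this

lemma sqParam_cont : Continuous sqParam := by
  refine Continuous.smul (f := fun θ : ℝ => (max |Real.cos θ| |Real.sin θ|)⁻¹)
    (g := fun θ : ℝ => (Real.cos θ, Real.sin θ)) ?_ ?_
  · exact (((Real.continuous_cos.abs).max (Real.continuous_sin.abs)).inv₀
      (fun θ => (sqm_pos θ).ne'))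
  · exact Real.continuous_cos.prodMk Real.continuous_sin

lemma sqParam_mem (θ : ℝ) : sqParam θ ∈ Metric.sphere (0 : ℝ × ℝ) 1 := by
  rw [mem_sphere_zero_iff_norm]
  have hm := sqm_pos θ
  rw [sqParam, Prod.norm_def]
  simp only [Prod.smul_fst, Prod.smul_snd, smul_eq_mul, Real.norm_eq_abs]
  rw [abs_mul, abs_mul, abs_inv, abs_of_pos hm,
    ← mul_max_of_nonneg _ _ (inv_nonneg.mpr hm.le), inv_mul_cancel₀ hm.ne']

lemma sqParam_periodic : Function.Periodic sqParam (2 * π) := by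
  intro θ; simp [sqParam, Real.cos_add_two_pi, Real.sin_add_two_pi]

lemma sqParam_surj {p : ℝ × ℝ} (hp : p ∈ Metric.sphere (0 : ℝ × ℝ) 1) :
    ∃ θ, sqParam θ = p := by
  obtain ⟨x, y⟩ := p
  rw [mem_sphere_zero_iff_norm, Prod.norm_def] at hp
  simp only [Real.norm_eq_abs] at hp
  have hz : (⟨x, y⟩ : ℂ) ≠ 0 := by
    intro h
    rw [Complex.ext_iff] at h
    simp only [Complex.zero_re, Complex.zero_im] at h
    rw [h.1, h.2] at hp; norm_num at hp
  set r : ℝ := ‖(⟨x, y⟩ : ℂ)‖ with hr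
  have hrpos : 0 < r := norm_pos_iff.mpr hz
  refine ⟨Complex.arg ⟨x, y⟩, ?_⟩
  have hc : Real.cos (Complex.arg ⟨x, y⟩) = x / r := Complex.cos_arg hz
  have hs : Real.sin (Complex.arg ⟨x, y⟩) = y / r := Complex.sin_arg ⟨x, y⟩
  rw [sqParam, hc, hs]
  have habs : |x / r| = |x| / r := by rw [abs_div, abs_of_pos hrpos]
  have habs' : |y / r| = |y| / r := by rw [abs_div, abs_of_pos hrpos]
  rw [habs, habs', max_div_div_right hrpos.le, hp]
  have : (1 / r)⁻¹ = r := by field_simp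
  rw [this, Prod.smul_mk, smul_eq_mul, smul_eq_mul]
  field_simp

lemma sqParam_inj_window {θ θ' : ℝ} (h : sqParam θ = sqParam θ')
    (hd : |θ - θ'| < 2 * π) : θ = θ' := by
  -- first get cos/sin equal
  have hm := sqm_pos θ
  have hm' := sqm_pos θ'
  have hcomp : Real.cos θ = (max |Real.cos θ| |Real.sin θ|) / (max |Real.cos θ'| |Real.sin θ'|) * Real.cos θ' ∧
      Real.sin θ = (max |Real.cos θ| |Real.sin θ|) / (max |Real.cos θ'| |Real.sin θ'|) * Real.sin θ' := by
    have h1 := congrArg Prod.fst h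
    have h2 := congrArg Prod.snd h
    simp only [sqParam, Prod.smul_fst, Prod.smul_snd, smul_eq_mul] at h1 h2
    constructor
    · field_simp at h1 ⊢
      nlinarith [h1]
    · field_simp at h2 ⊢
      nlinarith [h2]
  set c := (max |Real.cos θ| |Real.sin θ|) / (max |Real.cos θ'| |Real.sin θ'|) with hcdef
  have hcpos : 0 < c := div_pos hm hm'
  have hone : c ^ 2 = 1 := by
    have h1 := Real.sin_sq_add_cos_sq θ
    rw [hcomp.1, hcomp.2] at h1
    have h2 := Real.sin_sq_add_cos_sq θ'
    nlinarith
  have hc1 : c = 1 := by nlinarith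
  rw [hc1, one_mul, one_mul] at hcomp
  -- now use complex exponentials
  have hexp : Complex.exp (θ * Complex.I) = Complex.exp (θ' * Complex.I) := by
    rw [Complex.exp_mul_I, Complex.exp_mul_I, ← Complex.ofReal_cos, ← Complex.ofReal_sin,
      ← Complex.ofReal_cos, ← Complex.ofReal_sin, hcomp.1, hcomp.2]
  obtain ⟨n, hn⟩ := Complex.exp_eq_exp_iff_exists_int.mp hexp
  have hn' : (θ : ℂ) * Complex.I = (θ' + n * (2 * π)) * Complex.I := by
    rw [hn]; ring
  have hre : (θ : ℂ) = ((θ' + n * (2 * π) : ℝ) : ℂ) := by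
    have := mul_right_cancel₀ Complex.I_ne_zero hn'
    rw [this]; push_cast; ring
  have hθ : θ = θ' + n * (2 * π) := Complex.ofReal_inj.mp hre
  have hn0 : n = 0 := by
    by_contra hne
    have h1 : (1 : ℝ) ≤ |(n : ℝ)| := by
      rw [← Int.cast_abs]
      exact_mod_cast Int.one_le_abs (by omega)
    have h2 : θ - θ' = (n : ℝ) * (2 * π) := by rw [hθ]; ring
    rw [h2, abs_mul, abs_of_pos Real.two_pi_pos] at hd
    nlinarith [Real.two_pi_pos]
  rw [hθ, hn0]; push_cast; ring

lemma sphere_preconnected : IsPreconnected (Metric.sphere (0 : ℝ × ℝ) 1) := by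
  have : Metric.sphere (0 : ℝ × ℝ) 1 = range sqParam := by
    ext p
    constructor
    · intro hp; obtain ⟨θ, hθ⟩ := sqParam_surj hp; exact ⟨θ, hθ⟩
    · rintro ⟨θ, rfl⟩; exact sqParam_mem θ
  rw [this, ← image_univ]
  exact isPreconnected_univ.image _ sqParam_cont.continuousOn

lemma sphere_diff_preconnected (q : ℝ × ℝ) :
    IsPreconnected (Metric.sphere (0 : ℝ × ℝ) 1 \ {q}) := by
  by_cases hq : q ∈ Metric.sphere (0 : ℝ × ℝ) 1
  · obtain ⟨θ0, hθ0⟩ := sqParam_surj hq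
    have key : Metric.sphere (0 : ℝ × ℝ) 1 \ {q} = sqParam '' Ioo θ0 (θ0 + 2 * π) := by
      ext p
      constructor
      · rintro ⟨hp, hpq⟩
        obtain ⟨θ, hθ⟩ := sqParam_surj hp
        set θ' := toIcoMod Real.two_pi_pos θ0 θ with hθ'def
        have hmem := toIcoMod_mem_Ico Real.two_pi_pos θ0 θ
        have hval : sqParam θ' = p := by
          have hsub : θ - toIcoDiv Real.two_pi_pos θ0 θ • (2 * π) = θ' := by
            rw [hθ'def, toIcoMod]
          rw [← hθ, ← hsub]
          exact sqParam_periodic.sub_zsmul_eq _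
        have hne : θ' ≠ θ0 := by
          intro h; apply hpq; rw [← hval, h, hθ0]; rfl
        exact ⟨θ', ⟨lt_of_le_of_ne hmem.1 (Ne.symm hne), hmem.2⟩, hval⟩
      · rintro ⟨θ, hθ, rfl⟩
        refine ⟨sqParam_mem θ, ?_⟩
        intro h
        rw [mem_singleton_iff, ← hθ0] at h
        have : θ = θ0 := sqParam_inj_window h (by
          have h2p := Real.two_pi_pos
          rw [abs_lt]; exact ⟨by linarith [hθ.1], by linarith [hθ.2]⟩)
        rw [this] at hθ; exact lt_irrefl _ hθ.1
    rw [key]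
    exact isPreconnected_Ioo.image _ sqParam_cont.continuousOn
  · rw [diff_singleton_eq_self (by simpa using hq)]
    exact sphere_preconnected

lemma gen_split {D P Q : Set Pt} (hD : IsPreconnected D) (hP : IsClosed P)
    (hQ : IsClosed Q) (hsub : D ⊆ P ∪ Q) (hdisj : D ∩ (P ∩ Q) = ∅) :
    D ⊆ P ∨ D ⊆ Q := by
  by_contra hcon
  push_neg at hcon
  obtain ⟨x, hxD, hxP⟩ := not_subset.mp hcon.1
  obtain ⟨y, hyD, hyQ⟩ := not_subset.mp hcon.2
  have hd : ∀ z ∈ D, z ∈ P → z ∉ Q := fun z hz hp hq =>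
    (eq_empty_iff_forall_notMem.mp hdisj z) ⟨hz, hp, hq⟩
  have hcover : D ⊆ Qᶜ ∪ Pᶜ := by
    intro z hz
    by_cases hzP : z ∈ P
    · exact Or.inl (hd z hz hzP)
    · exact Or.inr hzP
  obtain ⟨z, hzD, hzQ', hzP'⟩ := hD Qᶜ Pᶜ hQ.isOpen_compl hP.isOpen_compl hcover
    ⟨y, hyD, hyQ⟩ ⟨x, hxD, hxP⟩
  rcases hsub hzD with h | h
  · exact hzP' h
  · exact hzQ' h

lemma jordan_nonempty {C : Set Pt} (h : IsJordanCurve C) : C.Nonempty := by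
  obtain ⟨e⟩ := h
  have hs : ((1:ℝ), (0:ℝ)) ∈ Metric.sphere (0 : Pt) 1 := by
    rw [mem_sphere_zero_iff_norm, Prod.norm_def]; norm_num
  exact ⟨(e ⟨_, hs⟩ : Pt), (e ⟨_, hs⟩).2⟩

lemma jordan_two_points {C : Set Pt} (h : IsJordanCurve C) :
    ∃ x ∈ C, ∃ y ∈ C, x ≠ y := by
  obtain ⟨e⟩ := h
  have hs1 : ((1:ℝ), (0:ℝ)) ∈ Metric.sphere (0 : Pt) 1 := by
    rw [mem_sphere_zero_iff_norm, Prod.norm_def]; norm_num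
  have hs2 : ((-1:ℝ), (0:ℝ)) ∈ Metric.sphere (0 : Pt) 1 := by
    rw [mem_sphere_zero_iff_norm, Prod.norm_def]; norm_num
  refine ⟨(e ⟨_, hs1⟩ : Pt), (e ⟨_, hs1⟩).2, (e ⟨_, hs2⟩ : Pt), (e ⟨_, hs2⟩).2, ?_⟩
  intro heq
  have : e ⟨_, hs1⟩ = e ⟨_, hs2⟩ := Subtype.ext heq
  have := e.injective this
  rw [Subtype.mk_eq_mk] at this
  norm_num [Prod.ext_iff] at this

lemma jordan_compact {C : Set Pt} (h : IsJordanCurve C) : IsCompact C := by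
  obtain ⟨e⟩ := h
  have : C = range (fun s : ↥(Metric.sphere (0 : Pt) 1) => (e s : Pt)) := by
    ext p
    constructor
    · intro hp; exact ⟨e.symm ⟨p, hp⟩, by simp⟩
    · rintro ⟨s, rfl⟩; exact (e s).2
  rw [this]
  exact isCompact_range (continuous_subtype_val.comp e.continuous)

lemma jordan_preconnected {C : Set Pt} (h : IsJordanCurve C) : IsPreconnected C := by
  obtain ⟨e⟩ := h
  have h1 : IsPreconnected (univ : Set ↥(Metric.sphere (0 : Pt) 1)) := by
    rw [← Topology.IsInducing.subtypeVal.isPreconnected_image, image_univ,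
      Subtype.range_coe]
    exact sphere_preconnected
  have : C = (fun s : ↥(Metric.sphere (0 : Pt) 1) => (e s : Pt)) '' univ := by
    ext p
    constructor
    · intro hp; exact ⟨e.symm ⟨p, hp⟩, trivial, by simp⟩
    · rintro ⟨s, _, rfl⟩; exact (e s).2
  rw [this]
  exact h1.image _ (continuous_subtype_val.comp e.continuous).continuousOn

lemma jordan_diff_preconnected {C : Set Pt} (h : IsJordanCurve C) (p : Pt) :
    IsPreconnected (C \ {p}) := by
  by_cases hp : p ∈ C
  · obtain ⟨e⟩ := h
    set q := e.symm ⟨p, hp⟩ with hq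
    have h1 : IsPreconnected {s : ↥(Metric.sphere (0 : Pt) 1) | s ≠ q} := by
      rw [← Topology.IsInducing.subtypeVal.isPreconnected_image]
      have : Subtype.val '' {s : ↥(Metric.sphere (0 : Pt) 1) | s ≠ q}
          = Metric.sphere (0 : Pt) 1 \ {(q : Pt)} := by
        ext z
        constructor
        · rintro ⟨s, hs, rfl⟩
          exact ⟨s.2, fun hz => hs (Subtype.ext hz)⟩
        · rintro ⟨hz, hzq⟩
          exact ⟨⟨z, hz⟩, fun h => hzq (congrArg Subtype.val h), rfl⟩
      rw [this]
      exact sphere_diff_preconnected _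
    have himg : C \ {p} = (fun s : ↥(Metric.sphere (0 : Pt) 1) => (e s : Pt)) ''
        {s | s ≠ q} := by
      ext z
      constructor
      · rintro ⟨hz, hzp⟩
        refine ⟨e.symm ⟨z, hz⟩, ?_, by simp⟩
        intro heq
        apply hzp
        have := congrArg e heq
        simp only [Homeomorph.apply_symm_apply] at this
        rw [hq] at this
        simp only [Homeomorph.apply_symm_apply] at this
        exact congrArg Subtype.val this
      · rintro ⟨s, hs, rfl⟩
        refine ⟨(e s).2, ?_⟩
        intro heq
        apply hs
        rw [hq]
        have : e s = ⟨p, hp⟩ := Subtype.ext heq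
        rw [← this]; simp
    rw [himg]
    exact h1.image _ (continuous_subtype_val.comp e.continuous).continuousOn
  · rw [diff_singleton_eq_self hp]
    exact jordan_preconnected h

/-- A Jordan curve cannot be contained in a (free) arc. -/
lemma jordan_not_in_arc {C : Set Pt} (hJ : IsJordanCurve C) {F : ℝ → Pt} {g : Pt → ℝ}
    (hg : Continuous g) (hgF : ∀ s, g (F s) = s)
    {u v : ℝ} (hsub : C ⊆ F '' Set.Icc u v) : False := by
  set D := g '' C with hD
  have hFgC : ∀ z ∈ C, F (g z) = z := by
    intro z hz
    obtain ⟨s, _, rfl⟩ := hsub hz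
    rw [hgF]
  have hDcomp : IsCompact D := (jordan_compact hJ).image hg
  have hDpre : IsPreconnected D := (jordan_preconnected hJ).image g hg.continuousOn
  obtain ⟨z1, hz1, z2, hz2, hz12⟩ := jordan_two_points hJ
  have hDne : D.Nonempty := ⟨g z1, z1, hz1, rfl⟩
  set α := sInf D with hα
  set β := sSup D with hβ
  have hαD : α ∈ D := hDcomp.sInf_mem hDne
  have hβD : β ∈ D := hDcomp.sSup_mem hDne
  have hIcc : D = Set.Icc α β := by
    apply Subset.antisymm
    · intro s hs
      exact ⟨csInf_le hDcomp.bddBelow hs, le_csSup hDcomp.bddAbove hs⟩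
    · exact hDpre.ordConnected.out hαD hβD
  have hgz12 : g z1 ≠ g z2 := by
    intro h
    apply hz12
    rw [← hFgC z1 hz1, ← hFgC z2 hz2, h]
  have hαβ : α < β := by
    rcases lt_or_ge α β with h | h
    · exact h
    · exfalso
      have h1 : g z1 ∈ D := ⟨z1, hz1, rfl⟩
      have h2 : g z2 ∈ D := ⟨z2, hz2, rfl⟩
      rw [hIcc] at h1 h2
      apply hgz12
      have e1 : g z1 = α := le_antisymm (le_trans h1.2 h) h1.1
      have e2 : g z2 = α := le_antisymm (le_trans h2.2 h) h2.1
      rw [e1, e2]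
  set m := (α + β) / 2 with hm
  have hαm : α < m := by rw [hm]; linarith
  have hmβ : m < β := by rw [hm]; linarith
  have hmD : m ∈ D := by rw [hIcc]; exact ⟨hαm.le, hmβ.le⟩
  set p0 := F m with hp0
  have hp0C : p0 ∈ C := by
    obtain ⟨z, hzC, hzm⟩ := hmD
    rw [hp0, ← hzm, hFgC z hzC]; exact hzC
  have himg : g '' (C \ {p0}) = D \ {m} := by
    ext s
    constructor
    · rintro ⟨z, ⟨hzC, hzp⟩, rfl⟩
      refine ⟨⟨z, hzC, rfl⟩, ?_⟩
      intro h
      apply hzp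
      rw [mem_singleton_iff, ← hFgC z hzC, h, ← hp0]
    · rintro ⟨⟨z, hzC, rfl⟩, hsm⟩
      refine ⟨z, ⟨hzC, ?_⟩, rfl⟩
      intro h
      apply hsm
      rw [mem_singleton_iff] at h
      rw [mem_singleton_iff, h, hp0, hgF]
  have hpre : IsPreconnected (D \ {m}) := by
    rw [← himg]
    exact (jordan_diff_preconnected hJ p0).image g hg.continuousOn
  -- but Icc α β \ {m} is disconnected
  obtain ⟨w, hw1, hw2, hw3⟩ := hpre (Iio m) (Ioi m) isOpen_Iio isOpen_Ioi
    (by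
      rintro s ⟨hsD, hsm⟩
      rcases lt_trichotomy s m with h | h | h
      · exact Or.inl h
      · exact absurd h hsm
      · exact Or.inr h)
    ⟨α, ⟨hαD, fun h => absurd (mem_singleton_iff.mp h) hαm.ne⟩, hαm⟩
    ⟨β, ⟨hβD, fun h => absurd (mem_singleton_iff.mp h) hmβ.ne'⟩, hmβ⟩
  exact absurd (lt_trans (mem_Iio.mp hw2) (mem_Ioi.mp hw3)) (lt_irrefl _)

end Helpers

/-- If `⋃Σ` is disconnected, one can add a simple string lying inside a single face of
`G(Σ)` and joining two distinct connected components of `⋃Σ`, so that the result is in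
general position, has fewer connected components, and has no obstruction if `Σ` has
none. -/
theorem connect_components_without_obstruction (S : Set PString)
    (hS : GenPos S) (hfin : S.Finite)
    (hdisc : ¬ IsPreconnected (StringUnion S)) :
    ∃ τ : PString, τ.Simple ∧
      (∃ q : Pt, q ∉ StringUnion S ∧
        τ.carrier \ τ.ends ⊆ connectedComponentIn (StringUnion S)ᶜ q) ∧
      τ.f 0 ∈ StringUnion S ∧ τ.f 1 ∈ StringUnion S ∧
      connectedComponentIn (StringUnion S) (τ.f 0) ≠
        connectedComponentIn (StringUnion S) (τ.f 1) ∧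
      GenPos (insert τ S) ∧
      (Comps (StringUnion (insert τ S))).ncard < (Comps (StringUnion S)).ncard ∧
      ((∀ C : Set Pt, ¬ ObstructionS S C) →
        ∀ C : Set Pt, ¬ ObstructionS (insert τ S) C) := by

  classical
  set K := StringUnion S with hKdef
  have carrier_compact : ∀ σ : PString, IsCompact σ.carrier :=
    fun σ => isCompact_Icc.image_of_continuousOn σ.cont
  have carrier_pre : ∀ σ : PString, IsPreconnected σ.carrier :=
    fun σ => isPreconnected_Icc.image _ σ.cont
  have hKcomp : IsCompact K := hfin.isCompact_biUnion (fun σ _ => carrier_compact σ)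
  have hKclosed : IsClosed K := hKcomp.isClosed
  have hsubK : ∀ σ ∈ S, σ.carrier ⊆ K := fun σ hσ => subset_biUnion_of_mem hσ
  have hKne : K.Nonempty := by
    by_contra h
    rw [not_nonempty_iff_eq_empty] at h
    exact hdisc (by rw [h]; exact isPreconnected_empty)
  obtain ⟨a, ha⟩ := hKne
  set A := connectedComponentIn K a with hAdef
  have haA : a ∈ A := mem_connectedComponentIn ha
  have hAsub : A ⊆ K := connectedComponentIn_subset _ _
  have hApre : IsPreconnected A := isPreconnected_connectedComponentIn
  obtain ⟨b, hbK, hbA⟩ : ∃ b ∈ K, b ∉ A := by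
    by_contra h
    push_neg at h
    apply hdisc
    have : K = A := Subset.antisymm h hAsub
    rw [this]
    exact hApre
  have hAclosed : IsClosed A := by
    have h1 : closure A ⊆ K := hKclosed.closure_subset_iff.mpr hAsub
    have h2 : closure A ⊆ A :=
      hApre.closure.subset_connectedComponentIn (subset_closure haA) h1
    exact isClosed_of_closure_subset h2
  have hcarrA : ∀ σ ∈ S, (σ.carrier ∩ A).Nonempty → σ.carrier ⊆ A := by
    intro σ hσ ⟨z, hz1, hz2⟩
    have hu : IsPreconnected (σ.carrier ∪ A) :=
      IsPreconnected.union z hz1 hz2 (carrier_pre σ) hApre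
    have := hu.subset_connectedComponentIn (Or.inr haA)
      (union_subset (hsubK σ hσ) hAsub)
    exact fun x hx => this (Or.inl hx)
  have hKAclosed : IsClosed (K \ A) := by
    have heq : K \ A = ⋃ σ ∈ {σ ∈ S | ¬(σ.carrier ∩ A).Nonempty}, σ.carrier := by
      ext x
      constructor
      · rintro ⟨hxK, hxA⟩
        obtain ⟨σ, hσ, hxσ⟩ := mem_iUnion₂.mp hxK
        refine mem_iUnion₂.mpr ⟨σ, ⟨hσ, fun hne => hxA (hcarrA σ hσ hne hxσ)⟩, hxσ⟩
      · intro hx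
        obtain ⟨σ, ⟨hσ, hne⟩, hxσ⟩ := mem_iUnion₂.mp hx
        exact ⟨hsubK σ hσ hxσ, fun hxA => hne ⟨x, hxσ, hxA⟩⟩
    rw [heq]
    exact ((hfin.subset (sep_subset _ _)).isCompact_biUnion
      (fun σ _ => carrier_compact σ)).isClosed
  -- the straight segment from a to b
  have hab : a ≠ b := fun h => hbA (h ▸ haA)
  set w : Pt := b - a with hwdef
  have hw : w ≠ 0 := sub_ne_zero.mpr (Ne.symm hab)
  set γ : ℝ → Pt := fun t => a + t • w with hγdef
  have hγcont : Continuous γ := by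
    exact continuous_const.add (continuous_id.smul continuous_const)
  have hγinj : Function.Injective γ := by
    intro t t' h
    have h2 : (t - t') • w = 0 := by
      have hh : a + t • w = a + t' • w := h
      have h3 : t • w = t' • w := add_left_cancel hh
      rw [sub_smul, h3, sub_self]
    rcases smul_eq_zero.mp h2 with h3 | h3
    · linarith [sub_eq_zero.mp h3]
    · exact absurd h3 hw
  set S1 := Set.Icc (0:ℝ) 1 ∩ γ ⁻¹' A with hS1def
  have hγ0 : γ 0 = a := by simp [hγdef]
  have hγ1 : γ 1 = b := by simp [hγdef, hwdef]
  have hS1comp : IsCompact S1 := isCompact_Icc.inter_right (hAclosed.preimage hγcont)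
  have hS1ne : S1.Nonempty := ⟨0, ⟨le_refl 0, zero_le_one⟩, by rw [mem_preimage, hγ0]; exact haA⟩
  set t1 := sSup S1 with ht1def
  have ht1 : t1 ∈ S1 := hS1comp.sSup_mem hS1ne
  have ht1A : γ t1 ∈ A := ht1.2
  have ht1I : t1 ∈ Set.Icc (0:ℝ) 1 := ht1.1
  set S2 := Set.Icc t1 1 ∩ γ ⁻¹' (K \ A) with hS2def
  have hS2comp : IsCompact S2 := isCompact_Icc.inter_right (hKAclosed.preimage hγcont)
  have hS2ne : S2.Nonempty := ⟨1, ⟨ht1I.2, le_refl 1⟩, by rw [mem_preimage, hγ1]; exact ⟨hbK, hbA⟩⟩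
  set t2 := sInf S2 with ht2def
  have ht2 : t2 ∈ S2 := hS2comp.sInf_mem hS2ne
  have ht2KA : γ t2 ∈ K \ A := ht2.2
  have ht2I : t2 ∈ Set.Icc t1 1 := ht2.1
  have h12 : t1 < t2 := by
    rcases lt_or_eq_of_le ht2I.1 with h | h
    · exact h
    · exact absurd (h ▸ ht1A) ht2KA.2
  have hmid : ∀ t, t1 < t → t < t2 → γ t ∉ K := by
    intro t hlt hgt hK
    by_cases hA : γ t ∈ A
    · have : t ∈ S1 := ⟨⟨le_trans ht1I.1 hlt.le, le_trans hgt.le ht2I.2⟩, hA⟩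
      exact absurd (le_csSup hS1comp.bddAbove this) (not_le.mpr hlt)
    · have : t ∈ S2 := ⟨⟨hlt.le, le_trans hgt.le ht2I.2⟩, hK, hA⟩
      exact absurd (csInf_le hS2comp.bddBelow this) (not_le.mpr hgt)
  set d := t2 - t1 with hddef
  have hd : 0 < d := sub_pos.mpr h12
  set F : ℝ → Pt := fun s => γ (t1 + s * d) with hFdef
  have hFcont : Continuous F :=
    hγcont.comp (continuous_const.add (continuous_id.mul continuous_const))
  have hFinj : Function.Injective F := by
    intro s s' h
    have := hγinj h
    have h2 : s * d = s' * d := by linarith [this]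
    exact mul_right_cancel₀ hd.ne' h2
  set τ : PString := ⟨F, hFcont.continuousOn, hFinj.injOn⟩ with hτdef
  have hτf : τ.f = F := rfl
  have hτcarrier : τ.carrier = F '' Set.Icc 0 1 := rfl
  have hτends : τ.ends = {F 0, F 1} := rfl
  have hF0 : F 0 = γ t1 := by show γ (t1 + 0 * d) = γ t1; norm_num
  have hF1 : F 1 = γ t2 := by
    show γ (t1 + 1 * d) = γ t2
    congr 1
    rw [hddef]; ring
  have hF0A : F 0 ∈ A := by rw [hF0]; exact ht1A
  have hF1KA : F 1 ∈ K \ A := by rw [hF1]; exact ht2KA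
  have hFIoo : ∀ s ∈ Set.Ioo (0:ℝ) 1, F s ∉ K := by
    intro s hs
    apply hmid
    · nlinarith [hs.1, hd]
    · have : t1 + s * d < t1 + d := by nlinarith [hs.2, hd]
      simpa [hddef] using this
  have hIccsplit : ∀ s ∈ Set.Icc (0:ℝ) 1, s = 0 ∨ s = 1 ∨ s ∈ Set.Ioo (0:ℝ) 1 := by
    intro s hs
    rcases eq_or_lt_of_le hs.1 with h | h
    · exact Or.inl h.symm
    rcases eq_or_lt_of_le hs.2 with h' | h'
    · exact Or.inr (Or.inl h')
    · exact Or.inr (Or.inr ⟨h, h'⟩)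
  have hTK : τ.carrier ∩ K ⊆ {F 0, F 1} := by
    rintro x ⟨⟨s, hs, rfl⟩, hxK⟩
    rcases hIccsplit s hs with h | h | h
    · exact Or.inl (by rw [h])
    · exact Or.inr (by rw [h]; rfl)
    · exact absurd hxK (hFIoo s h)
  have hdiffends : τ.carrier \ τ.ends = F '' Set.Ioo 0 1 := by
    rw [hτcarrier, hτends]
    rw [(Set.image_pair F 0 1).symm, ← image_diff hFinj]
    have hset : Set.Icc (0:ℝ) 1 \ {0, 1} = Set.Ioo 0 1 := by
      ext s
      constructor
      · rintro ⟨⟨h1, h2⟩, h3⟩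
        simp only [mem_insert_iff, mem_singleton_iff, not_or] at h3
        exact ⟨lt_of_le_of_ne h1 (Ne.symm h3.1), lt_of_le_of_ne h2 h3.2⟩
      · rintro ⟨h1, h2⟩
        refine ⟨⟨h1.le, h2.le⟩, ?_⟩
        simp only [mem_insert_iff, mem_singleton_iff, not_or]
        exact ⟨h1.ne', h2.ne⟩
    rw [hset]
  have hTpre : IsPreconnected (τ.carrier) := carrier_pre τ
  have hTintpre : IsPreconnected (F '' Set.Ioo 0 1) :=
    isPreconnected_Ioo.image _ hFcont.continuousOn
  have hwsq : w.1 ^ 2 + w.2 ^ 2 ≠ 0 := by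
    intro h
    apply hw
    have h1 : w.1 = 0 := by nlinarith [sq_nonneg w.1, sq_nonneg w.2]
    have h2 : w.2 = 0 := by nlinarith [sq_nonneg w.1, sq_nonneg w.2]
    exact Prod.ext h1 h2
  set g : Pt → ℝ :=
    fun x => (((x.1 - a.1) * w.1 + (x.2 - a.2) * w.2) / (w.1 ^ 2 + w.2 ^ 2) - t1) / d
    with hgdef
  have hgcont : Continuous g := by
    apply Continuous.div_const
    apply Continuous.sub _ continuous_const
    apply Continuous.div_const
    exact (((continuous_fst.sub continuous_const).mul continuous_const).add
      (((continuous_snd.sub continuous_const)).mul continuous_const))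
  have hgF : ∀ s, g (F s) = s := by
    intro s
    show ((((a + (t1 + s * d) • w).1 - a.1) * w.1 + ((a + (t1 + s * d) • w).2 - a.2) * w.2)
      / (w.1 ^ 2 + w.2 ^ 2) - t1) / d = s
    simp only [Prod.fst_add, Prod.snd_add, Prod.smul_fst, Prod.smul_snd, smul_eq_mul]
    field_simp
    ring
  have hSUins : StringUnion (insert τ S) = τ.carrier ∪ K := by
    rw [StringUnion, biUnion_insert]
    rfl
  have hF0T : F 0 ∈ τ.carrier := ⟨0, ⟨le_refl 0, zero_le_one⟩, rfl⟩
  have hF1T : F 1 ∈ τ.carrier := ⟨1, ⟨zero_le_one, le_refl 1⟩, rfl⟩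
  refine ⟨τ, hFinj.injOn, ?_, ?_, ?_, ?_, ?_, ?_, ?_⟩
  · -- single face
    refine ⟨F (1/2), hFIoo (1/2) (by norm_num), ?_⟩
    rw [hdiffends]
    exact hTintpre.subset_connectedComponentIn ⟨1/2, by norm_num, rfl⟩
      (fun x ⟨s, hs, hx⟩ => hx ▸ hFIoo s hs)
  · exact hAsub hF0A
  · exact hF1KA.1
  · -- different components
    intro heq
    have h1 : A = connectedComponentIn K (τ.f 0) :=
      connectedComponentIn_eq (show τ.f 0 ∈ A from hF0A)
    have h2 : τ.f 1 ∈ connectedComponentIn K (τ.f 1) := mem_connectedComponentIn hF1KA.1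
    rw [← heq, ← h1] at h2
    exact hF1KA.2 h2
  · -- general position
    intro σ hσ τ' hτ' hne
    rcases Set.mem_insert_iff.mp hσ with hσt | hσS
    · rcases Set.mem_insert_iff.mp hτ' with hτ't | hτ'S
      · exact absurd (hσt.trans hτ't.symm) hne
      · subst hσt
        constructor
        · exact (Set.toFinite ({F 0, F 1} : Set Pt)).subset
            (fun p hp => hTK ⟨hp.1, hsubK τ' hτ'S hp.2⟩)
        · intro p hp
          exact Or.inr (Or.inl (hTK ⟨hp.1, hsubK τ' hτ'S hp.2⟩))
    · rcases Set.mem_insert_iff.mp hτ' with hτ't | hτ'S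
      · subst hτ't
        constructor
        · exact (Set.toFinite ({F 0, F 1} : Set Pt)).subset
            (fun p hp => hTK ⟨hp.2, hsubK σ hσS hp.1⟩)
        · intro p hp
          exact Or.inr (Or.inr (hTK ⟨hp.2, hsubK σ hσS hp.1⟩))
      · exact hS σ hσS τ' hτ'S hne
  · -- fewer components
    set K' := StringUnion (insert τ S) with hK'def
    have hK' : K' = τ.carrier ∪ K := hSUins
    have hKsubK' : K ⊆ K' := by rw [hK']; exact subset_union_right
    have hTsubK' : τ.carrier ⊆ K' := by rw [hK']; exact subset_union_left
    set B := connectedComponentIn K (F 1) with hBdef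
    have hCompsfin : (Comps K).Finite := by
      apply Set.Finite.subset (hfin.image (fun σ => connectedComponentIn K (σ.f 0)))
      rintro N ⟨p, hp, rfl⟩
      obtain ⟨σ, hσ, hpσ⟩ := mem_iUnion₂.mp hp
      refine ⟨σ, hσ, ?_⟩
      have hσsub : σ.carrier ⊆ connectedComponentIn K (σ.f 0) :=
        (carrier_pre σ).subset_connectedComponentIn ⟨0, ⟨le_refl 0, zero_le_one⟩, rfl⟩
          (hsubK σ hσ)
      exact connectedComponentIn_eq (hσsub hpσ)
    have hN_K : ∀ N ∈ Comps K', (N ∩ K).Nonempty := by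
      rintro N ⟨p, hp, rfl⟩
      have hp' : p ∈ τ.carrier ∪ K := by rw [← hK']; exact hp
      rcases hp' with hpT | hpK
      · exact ⟨F 0, hTpre.subset_connectedComponentIn hpT hTsubK' hF0T, hAsub hF0A⟩
      · exact ⟨p, mem_connectedComponentIn hp, hpK⟩
    set Φ : Set Pt → Set Pt :=
      fun N => if h : (N ∩ K).Nonempty then connectedComponentIn K h.some else ∅ with hΦdef
    have hΦspec : ∀ N ∈ Comps K', Φ N ∈ Comps K ∧ Φ N ⊆ N := by
      intro N hN
      have h := hN_K N hN
      have hΦN : Φ N = connectedComponentIn K h.some := dif_pos h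
      obtain ⟨hsome1, hsome2⟩ := h.some_mem
      constructor
      · exact ⟨h.some, hsome2, hΦN⟩
      · obtain ⟨p, hp, rfl⟩ := hN
        rw [hΦN]
        have hsub' : connectedComponentIn K h.some ⊆ connectedComponentIn K' h.some :=
          isPreconnected_connectedComponentIn.subset_connectedComponentIn
            (mem_connectedComponentIn hsome2)
            ((connectedComponentIn_subset _ _).trans hKsubK')
        intro x hx
        have hx' : x ∈ connectedComponentIn K' h.some := hsub' hx
        rwa [← connectedComponentIn_eq hsome1] at hx'
    have hΦinj : Set.InjOn Φ (Comps K') := by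
      intro N1 h1 N2 h2 heq
      obtain ⟨hm1, hs1⟩ := hΦspec N1 h1
      obtain ⟨hm2, hs2⟩ := hΦspec N2 h2
      have hne : (Φ N1).Nonempty := by
        obtain ⟨p, hp, hrfl⟩ := hm1
        rw [hrfl]
        exact ⟨p, mem_connectedComponentIn hp⟩
      obtain ⟨z, hz⟩ := hne
      have hz2 : z ∈ N2 := hs2 (heq ▸ hz)
      obtain ⟨p1, hp1, rfl⟩ := h1
      obtain ⟨p2, hp2, rfl⟩ := h2
      rw [connectedComponentIn_eq (hs1 hz), connectedComponentIn_eq hz2]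
    have hAC : A ∈ Comps K := ⟨a, ha, hAdef⟩
    have hBC : B ∈ Comps K := ⟨F 1, hF1KA.1, hBdef⟩
    have hABne : A ≠ B := by
      intro h
      exact hF1KA.2 (h ▸ mem_connectedComponentIn hF1KA.1)
    set N0 := connectedComponentIn K' (F 0) with hN0def
    have hN0 : N0 ∈ Comps K' := ⟨F 0, hTsubK' hF0T, hN0def⟩
    have hTB : IsPreconnected (τ.carrier ∪ B) :=
      IsPreconnected.union (F 1) hF1T (mem_connectedComponentIn hF1KA.1) hTpre
        isPreconnected_connectedComponentIn
    have hATB : IsPreconnected (A ∪ (τ.carrier ∪ B)) :=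
      IsPreconnected.union (F 0) hF0A (Or.inl hF0T) hApre hTB
    have hATBsub : A ∪ (τ.carrier ∪ B) ⊆ N0 := by
      apply hATB.subset_connectedComponentIn (Or.inr (Or.inl hF0T))
      rintro x (hx | hx | hx)
      · exact hKsubK' (hAsub hx)
      · exact hTsubK' hx
      · exact hKsubK' (connectedComponentIn_subset _ _ hx)
    have hAN0 : A ⊆ N0 := fun x hx => hATBsub (Or.inl hx)
    have hBN0 : B ⊆ N0 := fun x hx => hATBsub (Or.inr (Or.inr hx))
    set M := if Φ N0 = A then B else A with hMdef
    have hMC : M ∈ Comps K := by rw [hMdef]; split_ifs; exacts [hBC, hAC]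
    have hMsub : M ⊆ N0 := by rw [hMdef]; split_ifs; exacts [hBN0, hAN0]
    have hMne : M.Nonempty := by
      rw [hMdef]; split_ifs
      exacts [⟨F 1, mem_connectedComponentIn hF1KA.1⟩, ⟨a, haA⟩]
    have hΦne : ∀ N ∈ Comps K', Φ N ≠ M := by
      intro N hN hNe
      by_cases hNN0 : N = N0
      · subst hNN0
        rw [hMdef] at hNe
        split_ifs at hNe with h
        · exact hABne (h.symm.trans hNe)
        · exact h hNe
      · obtain ⟨z, hzM⟩ := hMne
        have hzN : z ∈ N := (hΦspec N hN).2 (hNe ▸ hzM)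
        have hzN0 : z ∈ N0 := hMsub hzM
        obtain ⟨p, hp, rfl⟩ := hN
        apply hNN0
        rw [connectedComponentIn_eq hzN, hN0def, connectedComponentIn_eq hzN0]
    have hmaps : ∀ N ∈ Comps K', Φ N ∈ Comps K \ {M} := fun N hN =>
      ⟨(hΦspec N hN).1, fun hmem => hΦne N hN (by simpa using hmem)⟩
    calc (Comps K').ncard ≤ (Comps K \ {M}).ncard :=
          Set.ncard_le_ncard_of_injOn Φ hmaps hΦinj hCompsfin.diff
      _ < (Comps K).ncard := Set.ncard_diff_singleton_lt_of_mem hMC hCompsfin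
  · -- no new obstruction
    intro hno C hObs
    obtain ⟨⟨hJ, hCsub⟩, hcard⟩ := hObs
    have hCsub' : C ⊆ τ.carrier ∪ K := by rw [← hSUins]; exact hCsub
    -- helper facts about the two half-arcs
    have hJK : ∀ u v : ℝ, 0 ≤ u → v ≤ 1 → (F '' Set.Icc u v) ∩ K ⊆ {F 0, F 1} := by
      rintro u v hu hv x ⟨⟨s, hs, rfl⟩, hxK⟩
      rcases hIccsplit s ⟨le_trans hu hs.1, le_trans hs.2 hv⟩ with h | h | h
      · exact Or.inl (by rw [h])
      · exact Or.inr (by rw [h]; rfl)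
      · exact absurd hxK (hFIoo s h)
    -- step 1 : C avoids the open part of the new string
    have hCT : ∀ s ∈ Set.Ioo (0:ℝ) 1, F s ∉ C := by
      intro sb hsb hzC
      set z := F sb with hzdef
      have hzK : z ∉ K := hFIoo sb hsb
      set J1 := F '' Set.Icc 0 sb with hJ1def
      set J2 := F '' Set.Icc sb 1 with hJ2def
      have hJ1comp : IsCompact J1 := isCompact_Icc.image hFcont
      have hJ2comp : IsCompact J2 := isCompact_Icc.image hFcont
      have hJ1K : J1 ∩ K ⊆ {F 0, F 1} := hJK 0 sb (le_refl 0) hsb.2.le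
      have hJ2K : J2 ∩ K ⊆ {F 0, F 1} := hJK sb 1 hsb.1.le (le_refl 1)
      have hJ1F1 : F 1 ∉ J1 := by
        rintro ⟨s, hs, hFs⟩
        have := hFinj hFs
        exact absurd (this ▸ hs.2) (not_le.mpr hsb.2)
      have hJ2F0 : F 0 ∉ J2 := by
        rintro ⟨s, hs, hFs⟩
        have := hFinj hFs
        exact absurd (this ▸ hs.1) (not_le.mpr hsb.1)
      have hX1closed : IsClosed (A ∪ J1) := hAclosed.union hJ1comp.isClosed
      have hX2closed : IsClosed ((K \ A) ∪ J2) := hKAclosed.union hJ2comp.isClosed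
      have hTsplit : τ.carrier = J1 ∪ J2 := by
        rw [hτcarrier, hJ1def, hJ2def, ← image_union,
          Set.Icc_union_Icc_eq_Icc hsb.1.le hsb.2.le]
      have hCX : C ⊆ (A ∪ J1) ∪ ((K \ A) ∪ J2) := by
        intro x hx
        rcases hCsub' hx with hT | hKx
        · rw [hTsplit] at hT
          rcases hT with h | h
          · exact Or.inl (Or.inr h)
          · exact Or.inr (Or.inr h)
        · by_cases hA : x ∈ A
          · exact Or.inl (Or.inl hA)
          · exact Or.inr (Or.inl ⟨hKx, hA⟩)
      have hinter : (A ∪ J1) ∩ ((K \ A) ∪ J2) ⊆ {z} := by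
        rintro x ⟨hx1, hx2⟩
        rcases hx1 with hxA | hxJ1
        · rcases hx2 with hxKA | hxJ2
          · exact absurd hxA hxKA.2
          · rcases hJ2K ⟨hxJ2, hAsub hxA⟩ with h | h
            · exact absurd (h ▸ hxJ2) hJ2F0
            · subst h
              exact absurd hxA hF1KA.2
        · rcases hx2 with hxKA | hxJ2
          · rcases hJ1K ⟨hxJ1, hxKA.1⟩ with h | h
            · subst h
              exact absurd hF0A hxKA.2
            · exact absurd (h ▸ hxJ1) hJ1F1
          · -- x ∈ J1 ∩ J2
            obtain ⟨s, hs, rfl⟩ := hxJ1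
            obtain ⟨s', hs', heq⟩ := hxJ2
            have h1 : s' = s := hFinj heq
            have h2 : s = sb := le_antisymm hs.2 (h1 ▸ hs'.1)
            show F s ∈ {z}
            rw [h2, ← hzdef]
            exact rfl
      have hzJ1 : z ∈ J1 := ⟨sb, ⟨hsb.1.le, le_refl sb⟩, rfl⟩
      have hzJ2 : z ∈ J2 := ⟨sb, ⟨le_refl sb, hsb.2.le⟩, rfl⟩
      have hsplit1 := gen_split (jordan_diff_preconnected hJ z) hX1closed hX2closed
        (fun x hx => hCX hx.1)
        (by
          apply eq_empty_iff_forall_notMem.mpr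
          rintro x ⟨hxD, hxPQ⟩
          exact hxD.2 (hinter hxPQ))
      have hzF0 : z ≠ F 0 := fun h => hzK (h ▸ hAsub hF0A)
      have hzF1 : z ≠ F 1 := fun h => hzK (h ▸ hF1KA.1)
      rcases hsplit1 with hC1 | hC1
      · -- C ⊆ A ∪ J1
        have hCX1 : C ⊆ A ∪ J1 := by
          intro x hx
          by_cases hxz : x = z
          · exact Or.inr (hxz ▸ hzJ1)
          · exact hC1 ⟨hx, by simpa using hxz⟩
        have hsplit2 := gen_split (jordan_diff_preconnected hJ (F 0)) hAclosed
          hJ1comp.isClosed (fun x hx => hCX1 hx.1)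
          (by
            apply eq_empty_iff_forall_notMem.mpr
            rintro x ⟨hxD, hxA, hxJ⟩
            rcases hJ1K ⟨hxJ, hAsub hxA⟩ with h | h
            · exact hxD.2 (by simpa using h)
            · exact hJ1F1 (h ▸ hxJ))
        rcases hsplit2 with h | h
        · exact hzK (hAsub (h ⟨hzC, by simpa using hzF0⟩))
        · have hCJ1 : C ⊆ J1 := by
            intro x hx
            by_cases hxz : x = F 0
            · exact hxz ▸ ⟨0, ⟨le_refl 0, hsb.1.le⟩, rfl⟩
            · exact h ⟨hx, by simpa using hxz⟩
          exact jordan_not_in_arc hJ hgcont hgF hCJ1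
      · -- C ⊆ (K \ A) ∪ J2
        have hCX2 : C ⊆ (K \ A) ∪ J2 := by
          intro x hx
          by_cases hxz : x = z
          · exact Or.inr (hxz ▸ hzJ2)
          · exact hC1 ⟨hx, by simpa using hxz⟩
        have hsplit2 := gen_split (jordan_diff_preconnected hJ (F 1)) hKAclosed
          hJ2comp.isClosed (fun x hx => hCX2 hx.1)
          (by
            apply eq_empty_iff_forall_notMem.mpr
            rintro x ⟨hxD, hxKA, hxJ⟩
            rcases hJ2K ⟨hxJ, hxKA.1⟩ with h | h
            · exact hJ2F0 (h ▸ hxJ)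
            · exact hxD.2 (by simpa using h))
        rcases hsplit2 with h | h
        · exact hzK ((h ⟨hzC, by simpa using hzF1⟩).1)
        · have hCJ2 : C ⊆ J2 := by
            intro x hx
            by_cases hxz : x = F 1
            · exact hxz ▸ ⟨1, ⟨hsb.2.le, le_refl 1⟩, rfl⟩
            · exact h ⟨hx, by simpa using hxz⟩
          exact jordan_not_in_arc hJ hgcont hgF hCJ2
    -- step 2 : C is contained in the old union
    have hCK : C ⊆ K := by
      intro x hx
      rcases hCsub' hx with hT | h
      · obtain ⟨s, hs, rfl⟩ := hT
        rcases hIccsplit s hs with h0 | h1 | hIoo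
        · subst h0; exact hAsub hF0A
        · subst h1; exact hF1KA.1
        · exact absurd hx (hCT s hIoo)
      · exact h
    -- step 3 : τ has no two branches at points of C
    have hNoTwoTau : ∀ v ∈ C, ¬ TwoBranchesInside τ.carrier C v := by
      intro v hvC htb
      obtain ⟨hvT, hloc⟩ := htb
      have hv01 : v = F 0 ∨ v = F 1 := hTK ⟨hvT, hCK hvC⟩
      have hdisk : (∃ s0 ∈ Set.Ioo (0:ℝ) 1, F s0 ∈ EnclosedDisk C) →
          ∀ u ∈ Set.Ioo (0:ℝ) 1, F u ∈ EnclosedDisk C := by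
        rintro ⟨s0, hs0, hs0D⟩ u hu
        rcases hs0D with hC0 | ⟨hnC, hbd⟩
        · exact absurd hC0 (hCT s0 hs0)
        · right
          have hcompsub : F '' Set.Ioo 0 1 ⊆ connectedComponentIn Cᶜ (F s0) :=
            hTintpre.subset_connectedComponentIn ⟨s0, hs0, rfl⟩
              (by rintro x ⟨u', hu', rfl⟩; exact hCT u' hu')
          refine ⟨hCT u hu, ?_⟩
          rw [← connectedComponentIn_eq (hcompsub ⟨u, hu, rfl⟩)]
          exact hbd
      set r := dist (F 0) (F 1) with hrdef
      have hrpos : 0 < r :=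
        dist_pos.mpr (fun h => (by norm_num : (0:ℝ) = 1 → False) (hFinj h))
      obtain ⟨x, hx, y, hy, hsep⟩ := hloc (Metric.ball v r) (Metric.ball_mem_nhds v hrpos)
      have hget : ∀ x', x' ∈ (τ.carrier ∩ Metric.ball v r ∩ EnclosedDisk C) \ {x_ | x_ = v} →
          ∃ s ∈ Set.Ioo (0:ℝ) 1, F s = x' := by
        rintro x' ⟨⟨⟨⟨s, hs, rfl⟩, hU⟩, hD⟩, hne⟩
        refine ⟨s, ?_, rfl⟩
        rcases hIccsplit s hs with h0 | h1 | hIoo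
        · subst h0
          rcases hv01 with hv | hv
          · exact absurd (hv.symm) (by simpa using hne)
          · exfalso
            rw [hv] at hU
            rw [Metric.mem_ball, hrdef] at hU
            exact absurd hU (lt_irrefl _)
        · subst h1
          rcases hv01 with hv | hv
          · exfalso
            rw [hv] at hU
            rw [Metric.mem_ball, hrdef] at hU
            rw [dist_comm] at hU
            exact absurd hU (lt_irrefl _)
          · exact absurd (hv.symm) (by simpa using hne)
        · exact hIoo
      have hxmem : x ∈ (τ.carrier ∩ Metric.ball v r ∩ EnclosedDisk C) \ {x_ | x_ = v} := hx
      have hymem : y ∈ (τ.carrier ∩ Metric.ball v r ∩ EnclosedDisk C) \ {x_ | x_ = v} := hy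
      obtain ⟨s, hsI, hsx⟩ := hget x hxmem
      obtain ⟨t, htI, hty⟩ := hget y hymem
      have hxdisk : F s ∈ EnclosedDisk C := hsx ▸ hxmem.1.2
      have halldisk := hdisk ⟨s, hsI, hxdisk⟩
      set Kset := F '' Set.Icc (min s t) (max s t) with hKsetdef
      have hKsub : Kset ⊆ (τ.carrier ∩ EnclosedDisk C) \ {x_ | x_ = v} := by
        rintro _ ⟨u, hu, rfl⟩
        have huI : u ∈ Set.Ioo (0:ℝ) 1 :=
          ⟨lt_of_lt_of_le (lt_min hsI.1 htI.1) hu.1,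
           lt_of_le_of_lt hu.2 (max_lt hsI.2 htI.2)⟩
        refine ⟨⟨⟨u, ⟨huI.1.le, huI.2.le⟩, rfl⟩, halldisk u huI⟩, ?_⟩
        intro hFu
        rcases hv01 with hv | hv
        · have : u = 0 := hFinj (by rw [← hv]; exact hFu)
          exact absurd (this ▸ huI.1) (lt_irrefl 0)
        · have : u = 1 := hFinj (by rw [← hv]; exact hFu)
          exact absurd (this ▸ huI.2) (lt_irrefl 1)
      have hKpre : IsPreconnected Kset := isPreconnected_Icc.image _ hFcont.continuousOn
      have hxK : x ∈ Kset := ⟨s, ⟨min_le_left s t, le_max_left s t⟩, hsx⟩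
      have hyK : y ∈ Kset := ⟨t, ⟨min_le_right s t, le_max_right s t⟩, hty⟩
      exact (hsep Kset hKsub hKpre hxK) hyK
    -- step 4 : comparison of rainbow vertices
    have hVmono : Vset S ⊆ Vset (insert τ S) := by
      intro v hv
      rcases hv with h | h
      · obtain ⟨σ, hσ, hvσ⟩ := mem_iUnion₂.mp h
        exact Or.inl (mem_iUnion₂.mpr ⟨σ, mem_insert_of_mem _ hσ, hvσ⟩)
      · obtain ⟨σ, hσ, τ'', hτ'', hne, hcr⟩ := h
        exact Or.inr ⟨σ, mem_insert_of_mem _ hσ, τ'', mem_insert_of_mem _ hτ'', hne, hcr⟩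
    have hsub1 : {v | RainbowV S C v} ⊆ {v | RainbowV (insert τ S) C v} := by
      rintro v ⟨hvC, hvV, hno2⟩
      refine ⟨hvC, hVmono hvV, ?_⟩
      rintro ⟨σ, hσ, h2⟩
      rcases Set.mem_insert_iff.mp hσ with rfl | hσS
      · exact hNoTwoTau v hvC h2
      · exact hno2 ⟨σ, hσS, h2⟩
    have hsub2 : {v | RainbowV (insert τ S) C v} ⊆
        {v | RainbowV S C v} ∪ {F 0, F 1} := by
      rintro v ⟨hvC, hvV, hno2⟩
      by_cases hv01 : v = F 0 ∨ v = F 1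
      · exact Or.inr (by simpa using hv01)
      · left
        refine ⟨hvC, ?_, fun ⟨σ, hσS, h2⟩ => hno2 ⟨σ, mem_insert_of_mem _ hσS, h2⟩⟩
        rcases hvV with h | h
        · obtain ⟨σ, hσ, hvσ⟩ := mem_iUnion₂.mp h
          rcases Set.mem_insert_iff.mp hσ with rfl | hσS
          · exact absurd (by simpa [PString.ends] using hvσ) hv01
          · exact Or.inl (mem_iUnion₂.mpr ⟨σ, hσS, hvσ⟩)
        · obtain ⟨σ, hσ, τ'', hτ'', hne, hcr⟩ := h
          rcases Set.mem_insert_iff.mp hσ with rfl | hσS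
          · rcases Set.mem_insert_iff.mp hτ'' with rfl | hτ''S
            · exact absurd rfl hne
            · refine absurd ?_ hv01
              simpa using hTK ⟨hcr.1.1, hsubK _ hτ''S hcr.1.2⟩
          · rcases Set.mem_insert_iff.mp hτ'' with rfl | hτ''S
            · refine absurd ?_ hv01
              simpa using hTK ⟨hcr.1.2, hsubK _ hσS hcr.1.1⟩
            · exact Or.inr ⟨σ, hσS, τ'', hτ''S, hne, hcr⟩
    refine hno C ⟨⟨hJ, hCK⟩, ?_⟩
    by_cases hfinI : {v | RainbowV (insert τ S) C v}.Finite
    · calc {v | RainbowV S C v}.ncard ≤ {v | RainbowV (insert τ S) C v}.ncard :=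
            Set.ncard_le_ncard hsub1 hfinI
        _ ≤ 2 := hcard
    · have hRSinf : {v | RainbowV S C v}.Infinite := by
        intro hfinRS
        exact hfinI ((hfinRS.union (Set.toFinite ({F 0, F 1} : Set Pt))).subset hsub2)
      rw [hRSinf.ncard]
      norm_num
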